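/- There exist real constants σ* > 1 and C > 0 such that for every real σ ≥ σ*: f₂(σ) ≠ 0, the value f₂(1−σ)/f₂(σ) is a positive real number, and f₂(1−σ)/f₂(σ) ≤ C·σ^{−2}. In particular f₂(1−σ)/f₂(σ) → 0 as σ → +∞. -/

import Mathlib

open Complex

noncomputable def chi (s : ℂ) : ℂ := s * (s - 1) * completedRiemannZeta₀ s + 1

noncomputable def A : ℂ := Real.pi / 3 - 1

noncomputable def f1 (s : ℂ) : ℂ :=
  (s - 1) * ((s - 1) * (3 * s - 2) * (A * s - A + 1) * chi (s + 1) * chi (3 * s)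
    - (s + 1) * (s - 2) * chi s * chi (3 * s - 1)
    - 2 * (s - 1) * (s - 2) * chi s * chi (3 * s))

noncomputable def f2 (s : ℂ) : ℂ :=
  (s - 2) * ((A * s + 3) * (s - 1) ^ 2 * chi (s + 2)
    - 2 * (s - 1) * (s - 3) * chi (s + 1)
    - (s + 2) * (s - 3) * chi s)

noncomputable def Z1 (s : ℂ) : ℂ := chi (2 * s) * f1 s - chi (2 * s - 1) * f1 (1 - s)

noncomputable def Z2 (s : ℂ) : ℂ := chi (2 * s) * f2 s - chi (2 * s - 1) * f2 (1 - s)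

namespace F2RatioAux

open Real Filter

/-! ### Real-valued building blocks -/

noncomputable def Zr (σ : ℝ) : ℝ := ∑' n : ℕ, 1 / ((n : ℝ) + 1) ^ σ

noncomputable def Br (σ : ℝ) : ℝ := π ^ (-σ / 2) * Real.Gamma (σ / 2)

noncomputable def Lr (σ : ℝ) : ℝ := Br σ * Zr σ

noncomputable def a : ℝ := π / 3 - 1

noncomputable def F (σ : ℝ) : ℝ :=
  (σ - 2) * ((a * σ + 3) * (σ - 1) ^ 2 * ((σ + 2) * (σ + 1) * Lr (σ + 2))
    - 2 * (σ - 1) * (σ - 3) * ((σ + 1) * σ * Lr (σ + 1))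
    - (σ + 2) * (σ - 3) * (σ * (σ - 1) * Lr σ))

noncomputable def G (σ : ℝ) : ℝ :=
  (σ + 1) * ((a * σ - a - 3) * σ ^ 2 * ((σ - 2) * (σ - 3) * Lr (σ - 2))
    + 2 * σ * (σ + 2) * ((σ - 1) * (σ - 2) * Lr (σ - 1))
    + (σ - 3) * (σ + 2) * (σ * (σ - 1) * Lr σ))

/-! ### Facts about `Zr` -/

lemma Zr_summable {σ : ℝ} (hσ : 1 < σ) : Summable (fun n : ℕ => 1 / ((n : ℝ) + 1) ^ σ) := by
  have := (Real.summable_one_div_nat_rpow (p := σ)).mpr hσ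
  have h2 := (summable_nat_add_iff (f := fun n : ℕ => 1 / (n : ℝ) ^ σ) 1).mpr this
  refine h2.congr fun n => ?_
  push_cast; ring_nf

lemma zeta_ofReal {σ : ℝ} (hσ : 1 < σ) : riemannZeta (σ : ℂ) = (Zr σ : ℂ) := by
  rw [zeta_eq_tsum_one_div_nat_add_one_cpow (by simpa using hσ), Zr, Complex.ofReal_tsum]
  congr 1; ext n
  rw [Complex.ofReal_div, Complex.ofReal_one, Complex.ofReal_cpow (by positivity)]
  push_cast; ring_nf

lemma Zr_one_le {σ : ℝ} (hσ : 1 < σ) : 1 ≤ Zr σ := by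
  have h := Summable.le_tsum (Zr_summable hσ) 0 (fun n _ => by positivity)
  simp only [Nat.cast_zero, zero_add, Real.one_rpow, div_one] at h
  simpa [Zr, one_div] using h

lemma Zr_le_Zr_two {σ : ℝ} (hσ : 2 ≤ σ) : Zr σ ≤ Zr 2 := by
  refine Summable.tsum_le_tsum (fun n => ?_) (Zr_summable (by linarith)) (Zr_summable one_lt_two)
  have h1 : (1 : ℝ) ≤ (n : ℝ) + 1 := by
    have : (0:ℝ) ≤ (n:ℝ) := Nat.cast_nonneg n
    linarith
  have := Real.rpow_le_rpow_of_exponent_le h1 hσ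
  exact one_div_le_one_div_of_le (by positivity) this

lemma Zr_two_eq : Zr 2 = π ^ 2 / 6 := by
  have h := zeta_ofReal (σ := 2) one_lt_two
  rw [show ((2 : ℝ) : ℂ) = 2 by norm_num, riemannZeta_two] at h
  have : ((π ^ 2 / 6 : ℝ) : ℂ) = (Zr 2 : ℂ) := by rw [← h]; push_cast; ring
  exact_mod_cast this.symm

lemma Zr_le_two {σ : ℝ} (hσ : 2 ≤ σ) : Zr σ ≤ 2 := by
  have h1 := Zr_le_Zr_two hσ
  have h2 : Zr 2 ≤ 2 := by
    rw [Zr_two_eq]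
    nlinarith [Real.pi_lt_d2, Real.pi_pos]
  linarith

/-! ### Facts about `Br` and `Lr` -/

lemma Br_pos {σ : ℝ} (hσ : 0 < σ) : 0 < Br σ := by
  have := Real.Gamma_pos_of_pos (by linarith : 0 < σ / 2)
  have h2 : (0:ℝ) < π ^ (-σ / 2) := Real.rpow_pos_of_pos Real.pi_pos _
  exact mul_pos h2 this

lemma Br_add_two {σ : ℝ} (hσ : 0 < σ) : Br (σ + 2) = σ / (2 * π) * Br σ := by
  have h1 : (σ + 2) / 2 = σ / 2 + 1 := by ring
  have h2 : Real.Gamma ((σ + 2) / 2) = (σ / 2) * Real.Gamma (σ / 2) := by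
    rw [h1, Real.Gamma_add_one (by positivity)]
  have h3 : π ^ (-(σ + 2) / 2) = π ^ (-σ / 2) * π ^ (-1 : ℝ) := by
    rw [← Real.rpow_add Real.pi_pos]; ring_nf
  rw [Br, Br, h2, h3, Real.rpow_neg_one]
  field_simp

lemma Br_add_one_le {σ : ℝ} (hσ : 4 ≤ σ) : Br (σ + 1) ≤ 2 * Br (σ + 2) := by
  have hg : Real.Gamma ((σ + 1) / 2) ≤ Real.Gamma ((σ + 2) / 2) := by
    refine (Real.Gamma_strictMonoOn_Ici.monotoneOn ?_ ?_ (by linarith)).trans_eq rfl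
    · simp only [Set.mem_Ici]; linarith
    · simp only [Set.mem_Ici]; linarith
  have h3 : π ^ (-(σ + 1) / 2) = π ^ ((1:ℝ) / 2) * π ^ (-(σ + 2) / 2) := by
    rw [← Real.rpow_add Real.pi_pos]; ring_nf
  have hp : π ^ ((1:ℝ)/2) ≤ 2 := by
    have h1 : π ^ ((1:ℝ)/2) ≤ (4:ℝ) ^ ((1:ℝ)/2) :=
      Real.rpow_le_rpow Real.pi_pos.le Real.pi_le_four (by norm_num)
    have h4 : (4:ℝ) ^ ((1:ℝ)/2) = 2 := by
      rw [show (4:ℝ) = 2 ^ (2:ℕ) by norm_num, ← Real.rpow_natCast 2 2,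
        ← Real.rpow_mul (by norm_num)]
      norm_num
    linarith
  have hg0 : 0 ≤ Real.Gamma ((σ + 2) / 2) := (Real.Gamma_pos_of_pos (by linarith)).le
  have hπ0 : (0:ℝ) ≤ π ^ (-(σ + 2) / 2) := (Real.rpow_pos_of_pos Real.pi_pos _).le
  calc Br (σ + 1) = π ^ ((1:ℝ)/2) * π ^ (-(σ + 2) / 2) * Real.Gamma ((σ + 1) / 2) := by
        rw [Br, h3]
    _ ≤ 2 * (π ^ (-(σ + 2) / 2) * Real.Gamma ((σ + 2) / 2)) := by
        have hπ1 : (0:ℝ) ≤ π ^ ((1:ℝ)/2) := (Real.rpow_pos_of_pos Real.pi_pos _).le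
        have := mul_le_mul hp hg
          (Real.Gamma_pos_of_pos (by linarith : (0:ℝ) < (σ+1)/2)).le (by norm_num)
        nlinarith [mul_le_mul_of_nonneg_left this hπ0]
    _ = 2 * Br (σ + 2) := by rw [Br]

lemma Lr_pos {σ : ℝ} (hσ : 1 < σ) : 0 < Lr σ := by
  have := Br_pos (by linarith : (0:ℝ) < σ)
  rw [Lr]
  nlinarith [Zr_one_le hσ]

lemma Lr_ge_Br {σ : ℝ} (hσ : 1 < σ) : Br σ ≤ Lr σ := by
  have := Br_pos (by linarith : (0:ℝ) < σ)
  rw [Lr]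
  nlinarith [Zr_one_le hσ]

lemma Lr_le_two_Br {σ : ℝ} (hσ : 2 ≤ σ) : Lr σ ≤ 2 * Br σ := by
  have := Br_pos (by linarith : (0:ℝ) < σ)
  rw [Lr]
  nlinarith [Zr_le_two hσ]

/-! ### Complex-to-real reduction -/

lemma completed_ofReal {σ : ℝ} (hσ : 1 < σ) : completedRiemannZeta (σ : ℂ) = (Lr σ : ℂ) := by
  have hne : (σ : ℂ) ≠ 0 := by
    simp only [ne_eq, Complex.ofReal_eq_zero]; linarith
  have h := riemannZeta_def_of_ne_zero hne
  have hG : Complex.Gammaℝ (σ : ℂ) ≠ 0 :=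
    Complex.Gammaℝ_ne_zero_of_re_pos (by simpa using by linarith)
  have hGR : Complex.Gammaℝ (σ : ℂ) = (Br σ : ℂ) := by
    rw [Complex.Gammaℝ_def, Br]
    have h1 : ((π ^ (-σ / 2) : ℝ) : ℂ) = (π : ℂ) ^ (-(σ:ℂ) / 2) := by
      rw [Complex.ofReal_cpow Real.pi_pos.le]
      push_cast; ring_nf
    have h2 : Complex.Gamma ((σ:ℂ) / 2) = ((Real.Gamma (σ / 2) : ℝ) : ℂ) := by
      rw [← Complex.Gamma_ofReal]; push_cast; ring_nf
    rw [← h1, h2]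
    push_cast; ring
  have hval : completedRiemannZeta (σ : ℂ) = Complex.Gammaℝ (σ : ℂ) * riemannZeta (σ : ℂ) := by
    rw [h, mul_div_assoc', mul_div_cancel_left₀ _ hG]
  rw [hval, hGR, zeta_ofReal hσ, Lr]
  push_cast; ring

lemma chi_eq {s : ℂ} (h0 : s ≠ 0) (h1 : s ≠ 1) :
    chi s = s * (s - 1) * completedRiemannZeta s := by
  rw [chi, completedRiemannZeta_eq]
  have h1' : (1 : ℂ) - s ≠ 0 := by
    intro h; apply h1; linear_combination -h
  field_simp
  ring

lemma chi_ofReal {σ : ℝ} (hσ : 1 < σ) : chi (σ : ℂ) = ((σ * (σ - 1) * Lr σ : ℝ) : ℂ) := by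
  rw [chi_eq (by simp only [ne_eq, Complex.ofReal_eq_zero]; linarith)
    (by simp only [ne_eq, Complex.ofReal_eq_one]; linarith), completed_ofReal hσ]
  push_cast; ring

lemma chi_one_sub (s : ℂ) : chi (1 - s) = chi s := by
  rw [chi, chi, completedRiemannZeta₀_one_sub]
  ring

lemma A_eq : A = ((a : ℝ) : ℂ) := by rw [A, a]; push_cast; ring

lemma f2_ofReal {σ : ℝ} (hσ : 3 < σ) : f2 (σ : ℂ) = ((F σ : ℝ) : ℂ) := by
  have e2 : ((σ : ℂ) + 2) = ((σ + 2 : ℝ) : ℂ) := by push_cast; ring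
  have e1 : ((σ : ℂ) + 1) = ((σ + 1 : ℝ) : ℂ) := by push_cast; ring
  rw [f2, e2, e1, chi_ofReal (by linarith : (1:ℝ) < σ + 2),
    chi_ofReal (by linarith : (1:ℝ) < σ + 1), chi_ofReal (by linarith : (1:ℝ) < σ), A_eq, F]
  push_cast; ring

lemma f2_one_sub_ofReal {σ : ℝ} (hσ : 3 < σ) : f2 (1 - (σ : ℂ)) = ((G σ : ℝ) : ℂ) := by
  have e2 : (1 - (σ : ℂ) + 2) = 1 - ((σ - 2 : ℝ) : ℂ) := by push_cast; ring
  have e1 : (1 - (σ : ℂ) + 1) = 1 - ((σ - 1 : ℝ) : ℂ) := by push_cast; ring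
  rw [f2, e2, e1, chi_one_sub, chi_one_sub, chi_one_sub ((σ:ℝ):ℂ)]
  rw [chi_ofReal (by linarith : (1:ℝ) < σ - 2), chi_ofReal (by linarith : (1:ℝ) < σ - 1),
    chi_ofReal (by linarith : (1:ℝ) < σ), A_eq, G]
  push_cast; ring

/-! ### Bounds on `a` -/

lemma a_ge : 1/25 ≤ a := by
  rw [a]; nlinarith [Real.pi_gt_d6]

lemma a_le : a ≤ 1/3 := by
  rw [a]; nlinarith [Real.pi_le_four]

/-! ### Purely algebraic bracket estimates -/

set_option maxHeartbeats 1000000 in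
lemma Fbr_low {σ aa b2 L2 L1 L0 : ℝ} (hσ : 1000 ≤ σ) (ha1 : 1/25 ≤ aa)
    (hb2 : 0 < b2) (h1 : b2 ≤ L2) (h2 : L1 ≤ 4*b2) (h3 : σ*L0 ≤ 16*b2) :
    σ^5/100*b2 ≤ (aa*σ+3)*(σ-1)^2*((σ+2)*(σ+1)*L2)
      - 2*(σ-1)*(σ-3)*((σ+1)*σ*L1) - (σ+2)*(σ-3)*(σ*(σ-1)*L0) := by
  have hσ0 : (0:ℝ) ≤ σ := by linarith
  have e1 : (0:ℝ) ≤ σ-1 := by linarith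
  have e3 : (0:ℝ) ≤ σ-3 := by linarith
  have q1 : (0:ℝ) ≤ σ+1 := by linarith
  have q2 : (0:ℝ) ≤ σ+2 := by linarith
  have hc2 : (0:ℝ) ≤ (σ-1)^2*((σ+2)*(σ+1)) := mul_nonneg (sq_nonneg _) (mul_nonneg q2 q1)
  have haσ : 1/25*σ + 3 ≤ aa*σ + 3 := by
    have := mul_le_mul_of_nonneg_right ha1 hσ0; linarith
  have hlhs2 : (0:ℝ) ≤ (1/25*σ+3)*((σ-1)^2*((σ+2)*(σ+1))) :=
    mul_nonneg (by linarith) hc2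
  have s1 : (1/25*σ+3)*((σ-1)^2*((σ+2)*(σ+1))) ≤ (aa*σ+3)*((σ-1)^2*((σ+2)*(σ+1))) :=
    mul_le_mul_of_nonneg_right haσ hc2
  have hT2 : (1/25*σ+3)*((σ-1)^2*((σ+2)*(σ+1)))*b2
      ≤ (aa*σ+3)*(σ-1)^2*((σ+2)*(σ+1)*L2) := by
    have key := mul_le_mul s1 h1 hb2.le (le_trans hlhs2 s1)
    refine key.trans_eq ?_; ring
  have hT1 : 2*(σ-1)*(σ-3)*((σ+1)*σ*L1) ≤ 8*((σ-1)*(σ-3)*(σ+1)*σ)*b2 := by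
    have hc1 : (0:ℝ) ≤ 2*((σ-1)*(σ-3)*((σ+1)*σ)) := by
      have := mul_nonneg (mul_nonneg e1 e3) (mul_nonneg q1 hσ0); linarith
    linarith [mul_le_mul_of_nonneg_left h2 hc1]
  have hT0 : (σ+2)*(σ-3)*(σ*(σ-1)*L0) ≤ 16*((σ+2)*(σ-3)*(σ-1))*b2 := by
    have hc0 : (0:ℝ) ≤ (σ+2)*(σ-3)*(σ-1) := mul_nonneg (mul_nonneg q2 e3) e1
    linarith [mul_le_mul_of_nonneg_left h3 hc0]
  have hP1 : σ^5/100 + 8*((σ-1)*(σ-3)*(σ+1)*σ) + 16*((σ+2)*(σ-3)*(σ-1))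
      ≤ (1/25*σ+3)*((σ-1)^2*((σ+2)*(σ+1))) := by
    have h0 : (0:ℝ) ≤ σ - 1000 := by linarith
    nlinarith [mul_nonneg h0 (pow_nonneg hσ0 4), mul_nonneg h0 (pow_nonneg hσ0 3),
      mul_nonneg h0 (pow_nonneg hσ0 2), mul_nonneg h0 hσ0, pow_nonneg hσ0 3, pow_nonneg hσ0 4]
  have hP1b := mul_le_mul_of_nonneg_right hP1 hb2.le
  linarith [hT2, hT1, hT0, hP1b]

set_option maxHeartbeats 1000000 in
lemma Gbr_bounds {σ aa b Lm2 Lm1 L0 : ℝ} (hσ : 1000 ≤ σ) (ha1 : 1/25 ≤ aa) (ha2 : aa ≤ 1/3)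
    (hb : 0 < b) (hm2 : (σ-2)*Lm2 ≤ 16*b) (hm1 : Lm1 ≤ 4*b) (h0hi : L0 ≤ 2*b) (h0lo : b ≤ L0)
    (hm2p : 0 ≤ Lm2) (hm1p : 0 ≤ Lm1) :
    0 < (aa*σ-aa-3)*σ^2*((σ-2)*(σ-3)*Lm2) + 2*σ*(σ+2)*((σ-1)*(σ-2)*Lm1)
        + (σ-3)*(σ+2)*(σ*(σ-1)*L0)
    ∧ (aa*σ-aa-3)*σ^2*((σ-2)*(σ-3)*Lm2) + 2*σ*(σ+2)*((σ-1)*(σ-2)*Lm1)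
        + (σ-3)*(σ+2)*(σ*(σ-1)*L0) ≤ 16*σ^4*b := by
  have hσ0 : (0:ℝ) ≤ σ := by linarith
  have e1 : (0:ℝ) ≤ σ-1 := by linarith
  have e2 : (0:ℝ) ≤ σ-2 := by linarith
  have e3 : (0:ℝ) ≤ σ-3 := by linarith
  have q2 : (0:ℝ) ≤ σ+2 := by linarith
  have haσ3 : (0:ℝ) ≤ aa*σ - aa - 3 := by
    have := mul_le_mul_of_nonneg_right ha1 hσ0; linarith
  constructor
  · have hU2lo : (0:ℝ) ≤ (aa*σ-aa-3)*σ^2*((σ-2)*(σ-3)*Lm2) :=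
      mul_nonneg (mul_nonneg haσ3 (sq_nonneg _)) (mul_nonneg (mul_nonneg e2 e3) hm2p)
    have hU1lo : (0:ℝ) ≤ 2*σ*(σ+2)*((σ-1)*(σ-2)*Lm1) := by
      have := mul_nonneg (mul_nonneg hσ0 q2) (mul_nonneg (mul_nonneg e1 e2) hm1p)
      linarith
    have hU0lo : (0:ℝ) < (σ-3)*(σ+2)*(σ*(σ-1)*L0) := by
      apply mul_pos (mul_pos (by linarith) (by linarith))
      apply mul_pos (mul_pos (by linarith) (by linarith)) (by linarith)
    linarith
  · have hU2 : (aa*σ-aa-3)*σ^2*((σ-2)*(σ-3)*Lm2) ≤ 16*((aa*σ-aa-3)*σ^2*(σ-3))*b := by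
      have hc : (0:ℝ) ≤ (aa*σ-aa-3)*σ^2*(σ-3) :=
        mul_nonneg (mul_nonneg haσ3 (sq_nonneg _)) e3
      linarith [mul_le_mul_of_nonneg_left hm2 hc]
    have hU1 : 2*σ*(σ+2)*((σ-1)*(σ-2)*Lm1) ≤ 8*(σ*(σ+2)*(σ-1)*(σ-2))*b := by
      have hc : (0:ℝ) ≤ 2*σ*(σ+2)*((σ-1)*(σ-2)) := by
        have := mul_nonneg (mul_nonneg hσ0 q2) (mul_nonneg e1 e2); linarith
      linarith [mul_le_mul_of_nonneg_left hm1 hc]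
    have hU0 : (σ-3)*(σ+2)*(σ*(σ-1)*L0) ≤ 2*((σ-3)*(σ+2)*σ*(σ-1))*b := by
      have hc : (0:ℝ) ≤ (σ-3)*(σ+2)*(σ*(σ-1)) :=
        mul_nonneg (mul_nonneg e3 q2) (mul_nonneg hσ0 e1)
      linarith [mul_le_mul_of_nonneg_left h0hi hc]
    have hP2 : 16*((aa*σ-aa-3)*σ^2*(σ-3)) + 8*(σ*(σ+2)*(σ-1)*(σ-2)) + 2*((σ-3)*(σ+2)*σ*(σ-1))
        ≤ 16*σ^4 := by
      have h0 : (0:ℝ) ≤ σ - 1000 := by linarith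
      have key : (aa*σ-aa-3)*σ^2*(σ-3) ≤ (1/3)*σ^4 := by
        have h1 : aa*σ-aa-3 ≤ (1/3)*σ := by nlinarith
        have h2 : (0:ℝ) ≤ σ^2*(σ-3) := mul_nonneg (sq_nonneg _) e3
        nlinarith [mul_le_mul_of_nonneg_right h1 h2]
      nlinarith [mul_nonneg h0 (pow_nonneg hσ0 3), mul_nonneg h0 (pow_nonneg hσ0 2),
        mul_nonneg h0 hσ0]
    have hP2b := mul_le_mul_of_nonneg_right hP2 hb.le
    linarith [hU2, hU1, hU0, hP2b]

/-! ### Main real bounds -/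

set_option maxHeartbeats 1000000 in
lemma main_bounds {σ : ℝ} (hσ : 1000 ≤ σ) :
    0 < F σ ∧ 0 < G σ ∧ σ ^ 2 * G σ ≤ 100000 * F σ := by
  have hπ3 : (3:ℝ) ≤ π := Real.pi_gt_three.le
  have hπ4 : π ≤ 4 := Real.pi_le_four
  have ha1 := a_ge
  have ha2 := a_le
  have hσ0 : (0:ℝ) ≤ σ := by linarith
  set b2 := Br (σ + 2) with hb2def
  set b := Br σ with hbdef
  have hb2 : 0 < b2 := Br_pos (by linarith)
  have hb : 0 < b := Br_pos (by linarith)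
  have hrel : σ * b = 2 * π * b2 := by
    have h := Br_add_two (by linarith : (0:ℝ) < σ)
    rw [← hb2def, ← hbdef] at h
    field_simp at h
    linarith
  have hσb8 : σ * b ≤ 8 * b2 := by
    linarith [mul_le_mul_of_nonneg_right hπ4 hb2.le, hrel]
  -- bounds on Lr values
  have h1 : b2 ≤ Lr (σ + 2) := Lr_ge_Br (by linarith)
  have h2 : Lr (σ + 1) ≤ 4 * b2 := by
    have := Lr_le_two_Br (by linarith : (2:ℝ) ≤ σ + 1)
    have := Br_add_one_le (by linarith : (4:ℝ) ≤ σ)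
    linarith
  have h3 : σ * Lr σ ≤ 16 * b2 := by
    have hL := Lr_le_two_Br (by linarith : (2:ℝ) ≤ σ)
    linarith [mul_le_mul_of_nonneg_left hL hσ0, hσb8]
  have h0lo : b ≤ Lr σ := Lr_ge_Br (by linarith)
  have h0hi : Lr σ ≤ 2 * b := Lr_le_two_Br (by linarith)
  have hrelm : (σ - 2) * Br (σ - 2) = 2 * π * b := by
    have h := Br_add_two (by linarith : (0:ℝ) < σ - 2)
    rw [show σ - 2 + 2 = σ by ring, ← hbdef] at h
    field_simp at h
    linarith
  have hm2p : 0 < Lr (σ - 2) := Lr_pos (by linarith)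
  have hm2 : (σ - 2) * Lr (σ - 2) ≤ 16 * b := by
    have hL := Lr_le_two_Br (by linarith : (2:ℝ) ≤ σ - 2)
    have e2 : (0:ℝ) ≤ σ - 2 := by linarith
    linarith [mul_le_mul_of_nonneg_left hL e2, hrelm, mul_le_mul_of_nonneg_right hπ4 hb.le]
  have hm1p : 0 < Lr (σ - 1) := Lr_pos (by linarith)
  have hm1 : Lr (σ - 1) ≤ 4 * b := by
    have := Lr_le_two_Br (by linarith : (2:ℝ) ≤ σ - 1)
    have h := Br_add_one_le (by linarith : (4:ℝ) ≤ σ - 2)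
    rw [show σ - 2 + 1 = σ - 1 by ring, show σ - 2 + 2 = σ by ring, ← hbdef] at h
    linarith
  -- F bound
  have hF : (σ-2)*(σ^5/100*b2) ≤ F σ := by
    have hFbr := Fbr_low hσ ha1 hb2 h1 h2 h3
    rw [F]
    exact mul_le_mul_of_nonneg_left hFbr (by linarith)
  have hFpos : 0 < F σ := by
    have h6 : (0:ℝ) < (σ-2)*(σ^5/100*b2) := by
      apply mul_pos (by linarith)
      have h5 : (0:ℝ) < σ^5/100 := by positivity
      exact mul_pos h5 hb2
    linarith
  -- G bounds
  obtain ⟨hGbrpos, hGbrhi⟩ := Gbr_bounds hσ ha1 ha2 hb hm2 hm1 h0hi h0lo hm2p.le hm1p.le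
  have hGpos : 0 < G σ := by
    rw [G]
    exact mul_pos (by linarith) hGbrpos
  have hG : G σ ≤ (σ+1)*(16*σ^4*b) := by
    rw [G]
    exact mul_le_mul_of_nonneg_left hGbrhi (by linarith)
  refine ⟨hFpos, hGpos, ?_⟩
  clear hGbrpos hGbrhi hGpos h1 h2 h3 h0lo h0hi hm2 hm1 hm2p hm1p hrelm hrel
  have step1 : σ^2 * G σ ≤ 16*(σ+1)*σ^5*(σ*b) := by
    have := mul_le_mul_of_nonneg_left hG (by positivity : (0:ℝ) ≤ σ^2)
    nlinarith [this]
  have step2 : 16*(σ+1)*σ^5*(σ*b) ≤ 256*σ^6*b2 := by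
    have h5 : (0:ℝ) ≤ 16*(σ+1)*σ^5 := by positivity
    have k1 := mul_le_mul_of_nonneg_left hσb8 h5
    have k2 := mul_le_mul_of_nonneg_right (show σ+1 ≤ 2*σ by linarith)
      (mul_nonneg (mul_nonneg (by norm_num : (0:ℝ) ≤ 128) (pow_nonneg hσ0 5)) hb2.le)
    nlinarith [k1, k2]
  have step3 : 500*σ^6*b2 ≤ 100000 * F σ := by
    have k3 := mul_le_mul_of_nonneg_left hF (by norm_num : (0:ℝ) ≤ 100000)
    have k4 := mul_le_mul_of_nonneg_right
      (show 500*σ^6 ≤ 1000*(σ-2)*σ^5 by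
        nlinarith [mul_nonneg (pow_nonneg hσ0 5) (show (0:ℝ) ≤ σ-4 by linarith)]) hb2.le
    linarith [k3, k4]
  have hmid : (0:ℝ) ≤ 244*σ^6*b2 := by positivity
  linarith [step1, step2, step3]


lemma ratio_le {σ : ℝ} (hσ : 1000 ≤ σ) : G σ / F σ ≤ 100000 * (σ^2)⁻¹ := by
  obtain ⟨hFpos, hGpos, hbound⟩ := main_bounds hσ
  have hσ2 : (0:ℝ) < σ ^ 2 := by positivity
  rw [div_le_iff₀ hFpos]
  have h' : G σ ≤ 100000 * F σ / σ^2 := by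
    rw [le_div_iff₀ hσ2]; linarith
  calc G σ ≤ 100000 * F σ / σ^2 := h'
  _ = 100000 * (σ^2)⁻¹ * F σ := by ring

end F2RatioAux

theorem f2_ratio_decay :
    ∃ σstar C : ℝ, 1 < σstar ∧ 0 < C ∧
      (∀ σ : ℝ, σstar ≤ σ →
        f2 (σ : ℂ) ≠ 0 ∧
        (f2 (1 - (σ : ℂ)) / f2 (σ : ℂ)).im = 0 ∧
        0 < (f2 (1 - (σ : ℂ)) / f2 (σ : ℂ)).re ∧
        (f2 (1 - (σ : ℂ)) / f2 (σ : ℂ)).re ≤ C * σ ^ (-2 : ℤ)) ∧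
      Filter.Tendsto (fun σ : ℝ => f2 (1 - (σ : ℂ)) / f2 (σ : ℂ))
        Filter.atTop (nhds 0) := by
  classical
  open F2RatioAux in
  refine ⟨1000, 100000, by norm_num, by norm_num, ?_, ?_⟩
  · intro σ hσ
    obtain ⟨hFpos, hGpos, hbound⟩ := F2RatioAux.main_bounds hσ
    have h3 : (3:ℝ) < σ := by linarith
    have hf2 : f2 (σ : ℂ) = ((F2RatioAux.F σ : ℝ) : ℂ) := F2RatioAux.f2_ofReal h3
    have hf2' : f2 (1 - (σ : ℂ)) = ((F2RatioAux.G σ : ℝ) : ℂ) := F2RatioAux.f2_one_sub_ofReal h3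
    have hratio : f2 (1 - (σ : ℂ)) / f2 (σ : ℂ)
        = ((F2RatioAux.G σ / F2RatioAux.F σ : ℝ) : ℂ) := by
      rw [hf2, hf2', Complex.ofReal_div]
    have hσ2 : (0:ℝ) < σ ^ 2 := by positivity
    refine ⟨?_, ?_, ?_, ?_⟩
    · rw [hf2]
      simpa using hFpos.ne'
    · rw [hratio, Complex.ofReal_im]
    · rw [hratio, Complex.ofReal_re]
      exact div_pos hGpos hFpos
    · rw [hratio, Complex.ofReal_re]
      have hz : (σ:ℝ) ^ (-2 : ℤ) = (σ^2)⁻¹ := by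
        rw [zpow_neg, zpow_two, sq]
      rw [hz]
      exact F2RatioAux.ratio_le hσ
  · have hsq : Filter.Tendsto (fun σ : ℝ => 100000 * (σ^2)⁻¹) Filter.atTop (nhds 0) := by
      have h1 : Filter.Tendsto (fun σ : ℝ => σ^2) Filter.atTop Filter.atTop :=
        Filter.tendsto_pow_atTop two_ne_zero
      have := h1.inv_tendsto_atTop
      simpa using this.const_mul (100000:ℝ)
    have hreal : Filter.Tendsto (fun σ : ℝ => F2RatioAux.G σ / F2RatioAux.F σ)
        Filter.atTop (nhds 0) := by
      apply squeeze_zero' (t₀ := Filter.atTop)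
      · filter_upwards [Filter.eventually_ge_atTop (1000:ℝ)] with σ hσ
        obtain ⟨hFpos, hGpos, _⟩ := F2RatioAux.main_bounds hσ
        exact (div_pos hGpos hFpos).le
      · filter_upwards [Filter.eventually_ge_atTop (1000:ℝ)] with σ hσ
        exact F2RatioAux.ratio_le hσ
      · exact hsq
    have hext : ∀ᶠ σ : ℝ in Filter.atTop,
        ((F2RatioAux.G σ / F2RatioAux.F σ : ℝ) : ℂ) = f2 (1 - (σ : ℂ)) / f2 (σ : ℂ) := by
      filter_upwards [Filter.eventually_ge_atTop (1000:ℝ)] with σ hσ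
      have h3 : (3:ℝ) < σ := by linarith
      rw [F2RatioAux.f2_ofReal h3, F2RatioAux.f2_one_sub_ofReal h3, Complex.ofReal_div]
    have := (Complex.continuous_ofReal.tendsto 0).comp hreal
    simpa using this.congr' hext
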